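/- Let p ≥ 1 be an integer, let x₁, …, x_p be the p distinct roots of the Legendre polynomial L_p, and define the weights w_k = ∫_{−1}^{1} ∏_{j≠k} (x − x_j)/(x_k − x_j) dx for k = 1, …, p. Then every weight is strictly positive, the weights sum to 2, and consequently each w_k lies in the interval (0, 2]. -/

import Mathlib

/-- The Legendre polynomial `L_n` on `ℝ`, defined via the Rodrigues formula. -/
noncomputable def legendre (n : ℕ) : ℝ → ℝ :=
  fun x => (1 / ((2 : ℝ) ^ n * (n.factorial : ℝ))) *
    iteratedDeriv n (fun y => (y ^ 2 - 1) ^ n) x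

open Polynomial intervalIntegral


lemma st14_iteratedDeriv_eval (n : ℕ) (q : ℝ[X]) :
    iteratedDeriv n (fun y => q.eval y) = fun y => (derivative^[n] q).eval y := by
  induction n generalizing q with
  | zero => simp
  | succ n ih =>
    rw [iteratedDeriv_succ', Function.iterate_succ_apply]
    rw [show deriv (fun y => q.eval y) = fun y => (derivative q).eval y from
      funext fun y => Polynomial.deriv q]
    exact ih _

lemma st14_intInt (q : ℝ[X]) (a b : ℝ) :
    IntervalIntegrable (fun t => q.eval t) MeasureTheory.volume a b :=
  q.continuous_aeval.intervalIntegrable a b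

lemma st14_ibp (f g : ℝ[X]) (a b : ℝ) :
    ∫ t in a..b, (derivative f).eval t * g.eval t
      = f.eval b * g.eval b - f.eval a * g.eval a
        - ∫ t in a..b, f.eval t * (derivative g).eval t := by
  have h := intervalIntegral.integral_mul_deriv_eq_deriv_mul
    (u := fun t => f.eval t) (v := fun t => g.eval t)
    (u' := fun t => (derivative f).eval t) (v' := fun t => (derivative g).eval t)
    (fun t _ => f.hasDerivAt t) (fun t _ => g.hasDerivAt t)
    (st14_intInt _ a b) (st14_intInt _ a b)
  linarith [h]


lemma st14_orth : ∀ (j : ℕ) (G q : ℝ[X]), q.natDegree < j →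
    (∀ i < j, (derivative^[i] G).eval 1 = 0 ∧ (derivative^[i] G).eval (-1) = 0) →
    ∫ t in (-1:ℝ)..1, (derivative^[j] G).eval t * q.eval t = 0 := by
  intro j
  induction j with
  | zero => intro G q hq _; exact absurd hq (Nat.not_lt_zero _)
  | succ j ih =>
    intro G q hq hG
    rw [Function.iterate_succ_apply', st14_ibp]
    rw [(hG j (Nat.lt_succ_self j)).1, (hG j (Nat.lt_succ_self j)).2]
    by_cases hdq : derivative q = 0
    · simp [hdq]
    · have hnd : q.natDegree ≠ 0 := fun h => hdq (derivative_of_natDegree_zero h)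
      have h1 : (derivative q).natDegree < j := by
        have := natDegree_derivative_lt hnd
        omega
      rw [ih G (derivative q) h1 (fun i hi => hG i (Nat.lt_succ_of_lt hi))]
      ring

noncomputable def st14F (p : ℕ) : ℝ[X] := ((X:ℝ[X])^2 - 1)^p

lemma st14F_ne_zero (p : ℕ) : st14F p ≠ 0 := by
  intro h
  have : (st14F p).eval 2 = 0 := by rw [h]; simp
  simp [st14F] at this
  norm_num at this

lemma st14F_monic (p : ℕ) (hp : 1 ≤ p) : (st14F p).Monic := by
  have h1 : ((X:ℝ[X])^2 - 1).Monic := by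
    have := monic_X_pow_sub_C (1:ℝ) (n := 2) (by norm_num)
    simpa using this
  exact h1.pow p

lemma st14F_natDegree (p : ℕ) (hp : 1 ≤ p) : (st14F p).natDegree = 2 * p := by
  have h1 : ((X:ℝ[X])^2 - 1).natDegree = 2 := by
    have := natDegree_X_pow_sub_C (n := 2) (r := (1:ℝ))
    simpa using this
  rw [st14F, natDegree_pow, h1]; ring

lemma st14F_boundary (p : ℕ) (hp : 1 ≤ p) (i : ℕ) (hi : i < p) :
    (derivative^[i] (st14F p)).eval 1 = 0 ∧ (derivative^[i] (st14F p)).eval (-1) = 0 := by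
  have hfac : st14F p = (X - C (1:ℝ))^p * (X - C (-1:ℝ))^p := by
    rw [st14F, ← mul_pow]; ring_nf; simp [C_1]; ring_nf
  constructor
  · have hroot : i < rootMultiplicity 1 (st14F p) := by
      refine lt_of_lt_of_le hi ?_
      rw [le_rootMultiplicity_iff (st14F_ne_zero p)]
      rw [hfac]; exact Dvd.intro _ rfl
    exact isRoot_iterate_derivative_of_lt_rootMultiplicity hroot
  · have hroot : i < rootMultiplicity (-1) (st14F p) := by
      refine lt_of_lt_of_le hi ?_
      rw [le_rootMultiplicity_iff (st14F_ne_zero p)]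
      rw [hfac]; exact Dvd.intro_left _ rfl
    exact isRoot_iterate_derivative_of_lt_rootMultiplicity hroot

lemma st14P_coeff (p : ℕ) (hp : 1 ≤ p) :
    (derivative^[p] (st14F p)).coeff p = ((p + p).descFactorial p : ℝ) := by
  rw [coeff_iterate_derivative]
  have h2 : (st14F p).coeff (p + p) = 1 := by
    have := (st14F_monic p hp).coeff_natDegree
    rwa [st14F_natDegree p hp, two_mul] at this
  rw [h2, nsmul_eq_mul, mul_one]

lemma st14P_ne_zero (p : ℕ) (hp : 1 ≤ p) : derivative^[p] (st14F p) ≠ 0 := by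
  intro h
  have := st14P_coeff p hp
  rw [h] at this
  simp at this
  have h2 : (p + p).descFactorial p = 0 := by exact_mod_cast this.symm
  rw [Nat.descFactorial_eq_zero_iff_lt] at h2
  omega

lemma st14P_natDegree_le (p : ℕ) : (derivative^[p] (st14F p)).natDegree ≤ p := by
  have := natDegree_iterate_derivative (st14F p) p
  rcases Nat.eq_zero_or_pos p with h | h
  · subst h; simpa [st14F] using natDegree_X_pow_sub_C (n := 2) (r := (1:ℝ)) ▸ this
  · have h2 := st14F_natDegree p h
    omega

lemma st14_prod_dvd {p : ℕ} (x : Fin p → ℝ) (hxinj : Function.Injective x)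
    (Q : ℝ[X]) (hQ : Q ≠ 0) (hroot : ∀ j, Q.IsRoot (x j)) :
    (∏ j, (X - C (x j))) ∣ Q := by
  classical
  have hprod : (∏ j, (X - C (x j))) =
      ((Finset.univ.val.map x).map fun a => X - C a).prod := by
    rw [Multiset.map_map]
    rfl
  rw [hprod, Multiset.prod_X_sub_C_dvd_iff_le_roots hQ]
  have hnodup : (Finset.univ.val.map x).Nodup :=
    Finset.univ.nodup.map hxinj
  rw [Multiset.le_iff_count]
  intro a
  by_cases ha : a ∈ Finset.univ.val.map x
  · have h1 : (Finset.univ.val.map x).count a = 1 := by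
      exact Multiset.count_eq_one_of_mem hnodup ha
    rw [h1]
    obtain ⟨j, _, rfl⟩ := Multiset.mem_map.mp ha
    rw [count_roots]
    exact (Polynomial.rootMultiplicity_pos hQ).mpr (hroot j)
  · rw [Multiset.count_eq_zero_of_notMem ha]; exact Nat.zero_le _

lemma st14_prod_natDegree {p : ℕ} (x : Fin p → ℝ) :
    (∏ j, (X - C (x j)) : ℝ[X]).natDegree = p := by
  rw [natDegree_prod _ _ (fun j _ => X_sub_C_ne_zero (x j))]
  simp [natDegree_X_sub_C]

lemma st14_prod_ne_zero {p : ℕ} (x : Fin p → ℝ) :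
    (∏ j, (X - C (x j)) : ℝ[X]) ≠ 0 :=
  Finset.prod_ne_zero_iff.mpr fun j _ => X_sub_C_ne_zero (x j)

lemma st14_prod_orth (p : ℕ) (hp : 1 ≤ p) (x : Fin p → ℝ) (hxinj : Function.Injective x)
    (hroot : ∀ j, (derivative^[p] (st14F p)).IsRoot (x j))
    (r : ℝ[X]) (hr : r.natDegree < p) :
    ∫ t in (-1:ℝ)..1, (∏ j, (X - C (x j)) : ℝ[X]).eval t * r.eval t = 0 := by
  set P := derivative^[p] (st14F p) with hPdef
  set Φ := (∏ j, (X - C (x j)) : ℝ[X]) with hΦdef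
  obtain ⟨q, hq⟩ := st14_prod_dvd x hxinj P (st14P_ne_zero p hp) hroot
  have hqne : q ≠ 0 := by
    rintro rfl
    rw [mul_zero] at hq
    exact st14P_ne_zero p hp hq
  have hdeg : P.natDegree = p + q.natDegree := by
    rw [hq, natDegree_mul (st14_prod_ne_zero x) hqne, st14_prod_natDegree]
  have hq0 : q.natDegree = 0 := by have h2 := st14P_natDegree_le p; rw [← hPdef] at h2; omega
  obtain ⟨c, rfl⟩ := natDegree_eq_zero.mp hq0
  have hc : c ≠ 0 := fun h => hqne (by rw [h, map_zero])
  have hΦ : Φ = C c⁻¹ * P := by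
    have h1 : C c⁻¹ * C c = (1:ℝ[X]) := by rw [← C_mul, inv_mul_cancel₀ hc, C_1]
    calc Φ = Φ * (C c⁻¹ * C c) := by rw [h1, mul_one]
      _ = C c⁻¹ * (Φ * C c) := by ring
      _ = C c⁻¹ * P := by rw [← hq]
  simp only [hΦ, eval_mul, eval_C, mul_assoc]
  rw [intervalIntegral.integral_const_mul,
    st14_orth p (st14F p) r hr (st14F_boundary p hp), mul_zero]



/-- Let `x₁, …, x_p` be the `p` distinct roots of the Legendre polynomial
`L_p`, and let `w_k = ∫_{-1}^1 ∏_{j ≠ k} (t - x_j)/(x_k - x_j) dt`. Then every weight is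
strictly positive, the weights sum to `2`, and consequently each `w_k ∈ (0, 2]`. -/
theorem statement14 (p : ℕ) (hp : 1 ≤ p) (x : Fin p → ℝ)
    (hxinj : Function.Injective x) (hxroot : ∀ k, legendre p (x k) = 0)
    (w : Fin p → ℝ)
    (hw : ∀ k, w k = ∫ t in (-1 : ℝ)..1,
      ∏ j ∈ Finset.univ.erase k, (t - x j) / (x k - x j)) :
    (∀ k, 0 < w k) ∧ (∑ k, w k = 2) ∧ (∀ k, w k ∈ Set.Ioc (0 : ℝ) 2) := by
  classical
  have hne : Nonempty (Fin p) := ⟨⟨0, hp⟩⟩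
  have hinjOn : Set.InjOn x (Finset.univ : Finset (Fin p)) := hxinj.injOn
  -- roots of the polynomial P
  have hrootP : ∀ j, (derivative^[p] (st14F p)).IsRoot (x j) := by
    intro j
    have h := hxroot j
    rw [legendre] at h
    have hfun : (fun y : ℝ => (y^2 - 1)^p) = fun y => (st14F p).eval y := by
      funext y; simp [st14F]
    rw [hfun, st14_iteratedDeriv_eval] at h
    have hc : (1 / ((2:ℝ)^p * p.factorial)) ≠ 0 := by positivity
    rcases mul_eq_zero.mp h with h | h
    · exact absurd h hc
    · exact h
  -- the Lagrange basis polynomials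
  set ℓ : Fin p → ℝ[X] := fun k => Lagrange.basis Finset.univ x k with hℓ
  have hwk : ∀ k, w k = ∫ t in (-1:ℝ)..1, (ℓ k).eval t := by
    intro k
    rw [hw k]
    congr 1
    funext t
    rw [hℓ]
    simp only
    rw [Lagrange.basis, eval_prod]
    refine (Finset.prod_congr rfl fun j hj => ?_).symm
    rw [Lagrange.basisDivisor]
    simp only [eval_mul, eval_C, eval_sub, eval_X]
    rw [div_eq_mul_inv, mul_comm]
  have hℓne : ∀ k, ℓ k ≠ 0 := fun k =>
    Lagrange.basis_ne_zero hinjOn (Finset.mem_univ k)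
  have hdegℓ : ∀ k, (ℓ k).natDegree = p - 1 := by
    intro k
    rw [hℓ]
    simp only
    rw [Lagrange.natDegree_basis hinjOn (Finset.mem_univ k), Finset.card_univ, Fintype.card_fin]
  -- key: ∫ ℓ = ∫ ℓ²
  have hkey : ∀ k, (∫ t in (-1:ℝ)..1, (ℓ k).eval t)
      = ∫ t in (-1:ℝ)..1, ((ℓ k).eval t)^2 := by
    intro k
    set d : ℝ[X] := ℓ k * ℓ k - ℓ k with hd
    have hde : ∀ t, d.eval t = ((ℓ k).eval t)^2 - (ℓ k).eval t := by
      intro t; rw [hd]; simp [sq]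
    by_cases hd0 : d = 0
    · have : ∀ t : ℝ, ((ℓ k).eval t)^2 = (ℓ k).eval t := by
        intro t
        have := hde t
        rw [hd0] at this
        simp at this
        linarith
      simp_rw [this]
    · have hdroot : ∀ j, d.IsRoot (x j) := by
        intro j
        have hv : (ℓ k).eval (x j) = 0 ∨ (ℓ k).eval (x j) = 1 := by
          by_cases hjk : j = k
          · right; subst hjk; exact Lagrange.eval_basis_self hinjOn (Finset.mem_univ j)
          · left; exact Lagrange.eval_basis_of_ne (Ne.symm hjk) (Finset.mem_univ j)
        unfold d
        rcases hv with hv | hv <;> simp [IsRoot, hv]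
      obtain ⟨q, hq⟩ := st14_prod_dvd x hxinj d hd0 hdroot
      have hqne : q ≠ 0 := by rintro rfl; rw [mul_zero] at hq; exact hd0 hq
      have hdegd : d.natDegree ≤ (p-1) + (p-1) := by
        rw [hd]
        refine le_trans (natDegree_sub_le _ _) ?_
        rw [natDegree_mul (hℓne k) (hℓne k), hdegℓ k]
        omega
      have hdeg2 : d.natDegree = p + q.natDegree := by
        rw [hq, natDegree_mul (st14_prod_ne_zero x) hqne, st14_prod_natDegree]
      have hqdeg : q.natDegree < p := by omega
      have hzero : (∫ t in (-1:ℝ)..1, d.eval t) = 0 := by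
        have := st14_prod_orth p hp x hxinj hrootP q hqdeg
        rw [hq]
        simp_rw [eval_mul]
        exact this
      have hsub : (∫ t in (-1:ℝ)..1, d.eval t)
          = (∫ t in (-1:ℝ)..1, ((ℓ k).eval t)^2) - ∫ t in (-1:ℝ)..1, (ℓ k).eval t := by
        simp_rw [hde]
        refine intervalIntegral.integral_sub ?_ (st14_intInt _ _ _)
        have := st14_intInt (ℓ k * ℓ k) (-1) 1
        simp_rw [eval_mul, ← sq] at this
        exact this
      linarith [hzero, hsub]
  -- positivity
  have hpos : ∀ k, 0 < ∫ t in (-1:ℝ)..1, ((ℓ k).eval t)^2 := by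
    intro k
    have hcont : Continuous (fun t : ℝ => ((ℓ k).eval t)^2) :=
      ((ℓ k).continuous_aeval).pow 2
    rw [intervalIntegral.integral_of_le (by norm_num : (-1:ℝ) ≤ 1)]
    rw [MeasureTheory.setIntegral_pos_iff_support_of_nonneg_ae
      (Filter.Eventually.of_forall fun t => sq_nonneg _)
      (hcont.integrableOn_Ioc)]
    by_contra h
    push_neg at h
    have h0 : MeasureTheory.volume
        (Function.support (fun t : ℝ => ((ℓ k).eval t)^2) ∩ Set.Ioc (-1:ℝ) 1) = 0 :=
      le_antisymm h zero_le
    have hZ : Set.Finite {t : ℝ | (ℓ k).IsRoot t} := finite_setOf_isRoot (hℓne k)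
    have hsub : Set.Ioc (-1:ℝ) 1 ⊆
        (Function.support (fun t : ℝ => ((ℓ k).eval t)^2) ∩ Set.Ioc (-1:ℝ) 1)
          ∪ {t : ℝ | (ℓ k).IsRoot t} := by
      intro t ht
      by_cases hft : ((ℓ k).eval t)^2 = 0
      · right
        simpa [IsRoot] using pow_eq_zero_iff (two_ne_zero (α := ℕ)) |>.mp hft
      · left; exact ⟨hft, ht⟩
    have hle := le_trans (MeasureTheory.measure_mono hsub) (MeasureTheory.measure_union_le (μ := MeasureTheory.volume) _ _)
    rw [h0, hZ.measure_zero MeasureTheory.volume, zero_add] at hle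
    rw [Real.volume_Ioc] at hle
    simp at hle
    norm_num at hle
  -- sum of basis is 1
  have hsum1 : ∀ t : ℝ, (∑ k, (ℓ k).eval t) = 1 := by
    intro t
    have h := Lagrange.sum_basis hinjOn Finset.univ_nonempty
    calc (∑ k, (ℓ k).eval t) = (∑ k, ℓ k).eval t := by rw [eval_finset_sum]
      _ = 1 := by rw [hℓ]; simp only; rw [h, eval_one]
  have hsum : (∑ k, w k) = 2 := by
    calc (∑ k, w k) = ∑ k, ∫ t in (-1:ℝ)..1, (ℓ k).eval t :=
          Finset.sum_congr rfl fun k _ => hwk k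
      _ = ∫ t in (-1:ℝ)..1, (∑ k, (ℓ k).eval t) :=
          (intervalIntegral.integral_finset_sum fun k _ => st14_intInt _ _ _).symm
      _ = ∫ t in (-1:ℝ)..1, (1:ℝ) := by simp_rw [hsum1]
      _ = 2 := by norm_num
  have hposw : ∀ k, 0 < w k := fun k => by
    rw [hwk k, hkey k]; exact hpos k
  refine ⟨hposw, hsum, fun k => ⟨hposw k, ?_⟩⟩
  have h1 : w k + ∑ j ∈ Finset.univ.erase k, w j = 2 := by
    rw [Finset.add_sum_erase _ _ (Finset.mem_univ k)] at *
    exact hsum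
  have h2 : 0 ≤ ∑ j ∈ Finset.univ.erase k, w j :=
    Finset.sum_nonneg fun j _ => (hposw j).le
  linarith
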